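/- Let w : [0,∞) → (0,∞) be continuous, continuously differentiable on (0,∞), with w' strictly convex on (0,∞) and w'(x) → ∞ as x → ∞. Let φ > 0 and suppose h(b) := φ∫₀^∞ e^{−φu} w'(u+b) du is finite for all b ≥ 0 with h(b) → ∞ as b → ∞, and h'(b) = φ(h(b) − w'(b)). Then there is a unique b* ∈ [0,∞) at which h attains its minimum; moreover h(b) < w'(b) for 0 ≤ b < b* and h(b) > w'(b) for b > b*, and if b* > 0 then h(b*) = w'(b*). -/

import Mathlib

open MeasureTheory


lemma aux_convex {f : ℝ → ℝ} (hf : StrictConvexOn ℝ (Set.Ioi 0) f) {x y u : ℝ}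
    (hx : 0 < x) (hxy : x < y) (hu : 0 < u) :
    f (x + u) - f x < f (y + u) - f y := by
  have hd : 0 < y + u - x := by linarith
  set a := (y - x) / (y + u - x) with ha
  set b := u / (y + u - x) with hb
  have ha0 : 0 < a := div_pos (by linarith) hd
  have hb0 : 0 < b := div_pos hu hd
  have hab : a + b = 1 := by rw [ha, hb]; field_simp; ring
  have hxm : x ∈ Set.Ioi (0:ℝ) := hx
  have hym : y + u ∈ Set.Ioi (0:ℝ) := by simp only [Set.mem_Ioi]; linarith
  have hne : x ≠ y + u := by intro hc; linarith
  have h1 := hf.2 hxm hym hne ha0 hb0 hab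
  have h2 := hf.2 hxm hym hne hb0 ha0 (by linarith)
  have e1 : a • x + b • (y + u) = x + u := by
    rw [smul_eq_mul, smul_eq_mul, ha, hb]; field_simp; ring
  have e2 : b • x + a • (y + u) = y := by
    rw [smul_eq_mul, smul_eq_mul, ha, hb]; field_simp; ring
  rw [e1] at h1; rw [e2] at h2
  simp only [smul_eq_mul] at h1 h2
  have hsum : a * f x + b * f (y + u) + (b * f x + a * f (y + u)) = f x + f (y + u) := by
    linear_combination (f x + f (y + u)) * hab
  linarith

lemma aux_exp_integral {φ : ℝ} (hφ : 0 < φ) :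
    ∫ u in Set.Ioi (0:ℝ), Real.exp (-φ * u) = 1 / φ := by
  have := integral_Ioi_of_hasDerivAt_of_tendsto (f := fun u => -Real.exp (-φ * u) / φ)
      (f' := fun u => Real.exp (-φ * u)) (a := 0) (m := 0) ?_ ?_ ?_ ?_
  · rw [this]; field_simp; simp
  · exact (Continuous.continuousWithinAt (by continuity))
  · intro x _
    have h1 : HasDerivAt (fun u : ℝ => -φ * u) (-φ) x := by
      simpa using (hasDerivAt_id x).const_mul (-φ)
    have h2 := (h1.exp).neg.div_const φ
    convert h2 using 1
    · rfl
    · rfl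
    · field_simp
  · exact exp_neg_integrableOn_Ioi 0 hφ
  · have hmul : Filter.Tendsto (fun u : ℝ => φ * u) Filter.atTop Filter.atTop :=
      Filter.Tendsto.const_mul_atTop hφ Filter.tendsto_id
    have h1 : Filter.Tendsto (fun u : ℝ => Real.exp (-(φ * u))) Filter.atTop (nhds 0) :=
      Real.tendsto_exp_neg_atTop_nhds_zero.comp hmul
    have h0 : Filter.Tendsto (fun u : ℝ => Real.exp (-φ * u)) Filter.atTop (nhds 0) := by
      simpa [neg_mul] using h1
    simpa using (h0.neg.div_const φ)

/-- If `w'` is strictly convex on `(0,∞)` tending to `∞`, `φ > 0`,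
`h b = φ ∫₀^∞ e^{−φ u} w'(u+b) du` is finite with `h → ∞` and
`h' b = φ (h b − w' b)`, then `h` has a unique minimizer `b* ∈ [0,∞)`; moreover
`h < w'` on `[0, b*)`, `h > w'` on `(b*, ∞)`, and `h b* = w' b*` if `b* > 0`. -/
theorem unique_minimizer_of_h (w : ℝ → ℝ) (φ : ℝ) (h : ℝ → ℝ)
    (hφ : 0 < φ)
    (hwcont : ContinuousOn w (Set.Ici 0))
    (hwC1 : ContDiffOn ℝ 1 w (Set.Ioi 0))
    (hconv : StrictConvexOn ℝ (Set.Ioi 0) (deriv w))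
    (hwtop : Filter.Tendsto (deriv w) Filter.atTop Filter.atTop)
    (hint : ∀ b ∈ Set.Ici (0:ℝ),
      IntegrableOn (fun u => Real.exp (-φ * u) * deriv w (u + b)) (Set.Ioi 0))
    (hdef : ∀ b ∈ Set.Ici (0:ℝ),
      h b = φ * ∫ u in Set.Ioi (0:ℝ), Real.exp (-φ * u) * deriv w (u + b))
    (htop : Filter.Tendsto h Filter.atTop Filter.atTop)
    (hderiv : ∀ b ∈ Set.Ici (0:ℝ), HasDerivAt h (φ * (h b - deriv w b)) b) :
    ∃ bstar : ℝ, 0 ≤ bstar ∧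
      (∀ b ∈ Set.Ici (0:ℝ), h bstar ≤ h b) ∧
      (∀ b ∈ Set.Ici (0:ℝ), (∀ c ∈ Set.Ici (0:ℝ), h b ≤ h c) → b = bstar) ∧
      (∀ b, 0 ≤ b → b < bstar → h b < deriv w b) ∧
      (∀ b, bstar < b → deriv w b < h b) ∧
      (0 < bstar → h bstar = deriv w bstar) := by
  set g : ℝ → ℝ := fun b => h b - deriv w b with hgdef
  -- continuity of h on [0,∞)
  have hcont : ContinuousOn h (Set.Ici 0) :=
    fun b hb => ((hderiv b hb).continuousAt).continuousWithinAt
  have hderiv' : ∀ b ∈ Set.Ici (0:ℝ), deriv h b = φ * g b :=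
    fun b hb => (hderiv b hb).deriv
  -- integrability helpers
  have hexp_int : IntegrableOn (fun u => Real.exp (-φ * u)) (Set.Ioi 0) :=
    exp_neg_integrableOn_Ioi 0 hφ
  -- representation of g
  have hgrep : ∀ b ∈ Set.Ici (0:ℝ), g b =
      φ * ∫ u in Set.Ioi (0:ℝ),
        (Real.exp (-φ * u) * deriv w (u + b) - Real.exp (-φ * u) * deriv w b) := by
    intro b hb
    have h1 := hint b hb
    have h2 : IntegrableOn (fun u => Real.exp (-φ * u) * deriv w b) (Set.Ioi 0) :=
      hexp_int.mul_const _
    rw [MeasureTheory.integral_sub h1 h2, MeasureTheory.integral_mul_const,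
      aux_exp_integral hφ, hgdef]
    simp only
    rw [hdef b hb]
    field_simp
  -- strict monotonicity of g on (0,∞)
  have hgmono : ∀ b1 : ℝ, 0 < b1 → ∀ b2 : ℝ, b1 < b2 → g b1 < g b2 := by
    intro b1 hb1 b2 hlt
    have hb2 : 0 < b2 := hb1.trans hlt
    rw [hgrep b1 hb1.le, hgrep b2 hb2.le]
    apply mul_lt_mul_of_pos_left _ hφ
    set F1 : ℝ → ℝ := fun u => Real.exp (-φ * u) * deriv w (u + b1) - Real.exp (-φ * u) * deriv w b1 with hF1
    set F2 : ℝ → ℝ := fun u => Real.exp (-φ * u) * deriv w (u + b2) - Real.exp (-φ * u) * deriv w b2 with hF2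
    have int1 : IntegrableOn F1 (Set.Ioi 0) := (hint b1 hb1.le).sub (hexp_int.mul_const _)
    have int2 : IntegrableOn F2 (Set.Ioi 0) := (hint b2 hb2.le).sub (hexp_int.mul_const _)
    have hptwise : ∀ u ∈ Set.Ioi (0:ℝ), F1 u < F2 u := by
      intro u hu
      have hcc := aux_convex hconv hb1 hlt (Set.mem_Ioi.mp hu)
      have hexp : 0 < Real.exp (-φ * u) := Real.exp_pos _
      have e1 : F1 u = Real.exp (-φ * u) * (deriv w (b1 + u) - deriv w b1) := by
        rw [hF1]; simp only; rw [add_comm u b1]; ring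
      have e2 : F2 u = Real.exp (-φ * u) * (deriv w (b2 + u) - deriv w b2) := by
        rw [hF2]; simp only; rw [add_comm u b2]; ring
      rw [e1, e2]
      exact mul_lt_mul_of_pos_left hcc hexp
    have hpos : 0 < ∫ u in Set.Ioi (0:ℝ), (F2 u - F1 u) := by
      refine (MeasureTheory.setIntegral_pos_iff_support_of_nonneg_ae
        (f := fun u => F2 u - F1 u) ?_ (int2.sub int1)).mpr ?_
      swap
      · have hsub : Set.Ioi (0:ℝ) ⊆ Function.support (fun u => F2 u - F1 u) ∩ Set.Ioi 0 := by
          intro u hu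
          exact ⟨by simp only [Function.mem_support]; exact sub_ne_zero.mpr (hptwise u hu).ne', hu⟩
        calc (0:ENNReal) < ⊤ := by simp
        _ = volume (Set.Ioi (0:ℝ)) := Real.volume_Ioi.symm
        _ ≤ _ := measure_mono hsub
      · filter_upwards [ae_restrict_mem measurableSet_Ioi] with u hu
        exact sub_nonneg.mpr (hptwise u hu).le
    have := MeasureTheory.integral_sub int2 int1
    rw [this] at hpos
    linarith
  -- g is eventually positive
  have hBpos : ∃ B, 0 < B ∧ 0 < g B := by
    by_contra hcon
    push_neg at hcon
    have hanti : AntitoneOn h (Set.Ici 0) := by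
      apply antitoneOn_of_deriv_nonpos (convex_Ici 0) hcont
      · intro x hx
        rw [interior_Ici] at hx
        exact (hderiv x (Set.mem_Ici.mpr (le_of_lt hx))).differentiableAt.differentiableWithinAt
      · intro x hx
        rw [interior_Ici] at hx
        rw [hderiv' x (Set.mem_Ici.mpr (le_of_lt hx))]
        exact mul_nonpos_of_nonneg_of_nonpos hφ.le (hcon x hx)
    obtain ⟨b, hbgt, hb0⟩ :=
      ((htop.eventually_gt_atTop (h 0)).and (Filter.eventually_ge_atTop (0:ℝ))).exists
    have := hanti Set.self_mem_Ici hb0 hb0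
    linarith
  by_cases hS : ∃ b0, 0 < b0 ∧ g b0 ≤ 0
  · -- Case 2 : interior minimizer
    obtain ⟨b0, hb00, hb0le⟩ := hS
    obtain ⟨B, hB0, hBpos'⟩ := hBpos
    have hb0B : b0 < B := by
      by_contra hc
      push_neg at hc
      rcases eq_or_lt_of_le hc with hc' | hc'
      · rw [hc'] at hBpos'; linarith
      · have := hgmono B hB0 b0 hc'; linarith
    have hwderivcont : ContinuousOn (deriv w) (Set.Ioi 0) :=
      hwC1.continuousOn_deriv_of_isOpen isOpen_Ioi le_rfl
    have hgcont : ContinuousOn g (Set.Ioi 0) :=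
      ((hcont.mono (Set.Ioi_subset_Ici le_rfl)).sub hwderivcont)
    obtain ⟨bstar, hbsmem, hgz⟩ :=
      (intermediate_value_Icc hb0B.le
        (hgcont.mono (fun x hx => lt_of_lt_of_le hb00 hx.1))) ⟨hb0le, hBpos'.le⟩
    have hbspos : 0 < bstar := lt_of_lt_of_le hb00 hbsmem.1
    have hneg : ∀ b, 0 < b → b < bstar → g b < 0 := by
      intro b h1 h2
      have := hgmono b h1 bstar h2
      rw [hgz] at this; exact this
    have hposafter : ∀ b, bstar < b → 0 < g b := by
      intro b h1
      have := hgmono bstar hbspos b h1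
      rw [hgz] at this; exact this
    -- g 0 < 0 via MVT slope argument
    have hg0 : g 0 < 0 := by
      set m := bstar / 2 with hm
      have hm0 : 0 < m := by positivity
      have hmlt : m < bstar := by rw [hm]; linarith
      have hKneg : g m < 0 := hneg m hm0 hmlt
      have hslope : ∀ b, 0 < b → b ≤ m → (h b - h 0) / b ≤ φ * g m := by
        intro b hb1 hb2
        obtain ⟨c, hc, hceq⟩ := exists_hasDerivAt_eq_slope h
          (fun x => φ * (h x - deriv w x)) hb1
          (hcont.mono (fun x hx => hx.1))
          (fun x hx => hderiv x (le_of_lt hx.1))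
        have hcm : g c < g m := hgmono c hc.1 m (lt_of_lt_of_le hc.2 hb2)
        have : φ * (h c - deriv w c) ≤ φ * g m :=
          (mul_le_mul_of_nonneg_left hcm.le hφ.le)
        rw [hceq, sub_zero] at this
        exact this
      have htend : Filter.Tendsto (fun b => (h b - h 0) / b)
          (nhdsWithin 0 (Set.Ioi 0)) (nhds (φ * (h 0 - deriv w 0))) := by
        have h1 := hasDerivAt_iff_tendsto_slope.mp (hderiv 0 Set.self_mem_Ici)
        have h2 := h1.mono_left (nhdsWithin_mono 0 (fun x hx => ne_of_gt hx))
        refine h2.congr' ?_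
        filter_upwards [self_mem_nhdsWithin] with x hx
        rw [slope_def_field]
        rw [sub_zero]
      have hle : φ * (h 0 - deriv w 0) ≤ φ * g m := by
        refine le_of_tendsto htend ?_
        filter_upwards [Ioc_mem_nhdsGT_of_mem ⟨le_refl (0:ℝ), hm0⟩] with b hb
        exact hslope b hb.1 hb.2
      have : g 0 ≤ g m := by
        have := (mul_le_mul_iff_right₀ hφ).mp hle
        simpa [hgdef] using this
      linarith
    -- monotone pieces
    have hanti2 : StrictAntiOn h (Set.Icc 0 bstar) := by
      apply strictAntiOn_of_deriv_neg (convex_Icc 0 bstar)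
        (hcont.mono (fun x hx => hx.1))
      intro x hx
      rw [interior_Icc] at hx
      rw [hderiv' x hx.1.le]
      exact mul_neg_of_pos_of_neg hφ (hneg x hx.1 hx.2)
    have hmono2 : StrictMonoOn h (Set.Ici bstar) := by
      apply strictMonoOn_of_deriv_pos (convex_Ici bstar)
        (hcont.mono (Set.Ici_subset_Ici.mpr hbspos.le))
      intro x hx
      rw [interior_Ici] at hx
      rw [hderiv' x (hbspos.trans hx).le]
      exact mul_pos hφ (hposafter x hx)
    refine ⟨bstar, hbspos.le, ?_, ?_, ?_, ?_, ?_⟩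
    · intro b hb
      rcases le_or_gt b bstar with hble | hbgt
      · rcases eq_or_lt_of_le hble with rfl | hblt
        · exact le_rfl
        · exact (hanti2 ⟨hb, hble⟩ ⟨hbspos.le, le_rfl⟩ hblt).le
      · exact (hmono2 Set.self_mem_Ici hbgt.le hbgt).le
    · intro b hb hmin
      by_contra hne
      have hlt := hmin bstar (Set.mem_Ici.mpr hbspos.le)
      rcases lt_or_gt_of_ne hne with hc | hc
      · have := hanti2 ⟨hb, hc.le⟩ ⟨hbspos.le, le_rfl⟩ hc
        linarith
      · have := hmono2 Set.self_mem_Ici hc.le hc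
        linarith
    · intro b hb0' hblt
      rcases eq_or_lt_of_le hb0' with rfl | hbpos
      · have := hg0; simp only [hgdef] at this; linarith
      · have := hneg b hbpos hblt; simp only [hgdef] at this; linarith
    · intro b hb
      have := hposafter b hb; simp only [hgdef] at this; linarith
    · intro _
      have : g bstar = 0 := hgz
      simp only [hgdef] at this
      linarith
  · -- Case 1 : boundary minimizer 0
    push_neg at hS
    have hmono1 : StrictMonoOn h (Set.Ici 0) := by
      apply strictMonoOn_of_deriv_pos (convex_Ici 0) hcont
      intro x hx
      rw [interior_Ici] at hx
      rw [hderiv' x (Set.mem_Ici.mpr hx.le)]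
      exact mul_pos hφ (hS x hx)
    refine ⟨0, le_rfl, ?_, ?_, ?_, ?_, ?_⟩
    · intro b hb
      rcases eq_or_lt_of_le (Set.mem_Ici.mp hb) with rfl | hb'
      · exact le_rfl
      · exact (hmono1 Set.self_mem_Ici hb hb').le
    · intro b hb hmin
      by_contra hne
      have hb' : 0 < b := lt_of_le_of_ne (Set.mem_Ici.mp hb) (Ne.symm hne)
      have h1 := hmono1 Set.self_mem_Ici hb hb'
      have h2 := hmin 0 Set.self_mem_Ici
      linarith
    · intro b hb0' hblt; linarith
    · intro b hb
      have := hS b hb; simp only [hgdef] at this; linarith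
    · intro hc; exact absurd hc (lt_irrefl 0)
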